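/- For any γ > 0 and integer r ≥ 2, there exists N such that for all k ≥ N: if K is a graph on k vertices with at least (1-γ)·C(k,2) edges, then at least (1-γr²)·C(k,2) edges of K belong to a copy of the complete graph K_r in K. -/

import Mathlib

open Finset SimpleGraph
namespace EdgesCov






variable {k r : ℕ} (K : SimpleGraph (Fin k)) [DecidableRel K.Adj]

/-- e is covered: lies in an r-clique. -/
def covp (r : ℕ) (e : Sym2 (Fin k)) : Prop :=
  ∃ s : Finset (Fin k), s.card = r ∧ K.IsClique ↑s ∧ ∀ v ∈ e, v ∈ s

/-- common neighborhood of the endpoints of e. -/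
def cnbr (e : Sym2 (Fin k)) : Finset (Fin k) :=
  Finset.univ.filter (fun w => ∀ x ∈ e, K.Adj x w)

lemma mem_cnbr {u v w : Fin k} : w ∈ cnbr K s(u, v) ↔ K.Adj u w ∧ K.Adj v w := by
  constructor
  · intro h
    rw [cnbr, mem_filter] at h
    exact ⟨h.2 u (by simp), h.2 v (by simp)⟩
  · rintro ⟨h1, h2⟩
    rw [cnbr, mem_filter]
    refine ⟨mem_univ _, fun x hx => ?_⟩
    rcases Sym2.mem_iff.1 hx with rfl | rfl <;> assumption

lemma extend_clique {u v : Fin k} (huv : K.Adj u v) (hr : 2 ≤ r)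
    {T : Finset (Fin k)} (hT : T ⊆ cnbr K s(u, v)) (hTc : T.card = r - 2)
    (hcl : K.IsClique ↑T) : covp K r s(u, v) := by
  have hu : u ∉ T := fun h => K.irrefl ((mem_cnbr K).1 (hT h)).1
  have hv : v ∉ T := fun h => K.irrefl ((mem_cnbr K).1 (hT h)).2
  refine ⟨insert u (insert v T), ?_, ?_, ?_⟩
  · rw [card_insert_of_notMem (by simp [hu, huv.ne]), card_insert_of_notMem hv, hTc]
    omega
  · have h1 : K.IsClique ↑(insert v T) := by
      rw [coe_insert]
      exact hcl.insert (fun b hb _ => ((mem_cnbr K).1 (hT hb)).2)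
    rw [coe_insert]
    refine h1.insert (fun b hb _ => ?_)
    rw [coe_insert] at hb
    rcases hb with rfl | hb
    · exact huv
    · exact ((mem_cnbr K).1 (hT hb)).1
  · intro x hx
    rcases Sym2.mem_iff.1 hx with rfl | rfl <;> simp

/-- Any edge has at least k - 2 - s missing edges sharing a vertex with it. -/
lemma U1count {u v : Fin k} (huv : K.Adj u v) :
    k - 2 - (cnbr K s(u, v)).card ≤
      ((Kᶜ.edgeFinset).filter (fun f => ∃ x, x ∈ s(u, v) ∧ x ∈ f)).card := by
  classical
  set W : Finset (Fin k) := Finset.univ \ (cnbr K s(u, v) ∪ {u, v}) with hW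
  have hWcard : k - 2 - (cnbr K s(u, v)).card ≤ W.card := by
    have h1 : W.card = k - (cnbr K s(u, v) ∪ {u, v}).card := by
      rw [hW, card_sdiff_of_subset (subset_univ _), card_univ, Fintype.card_fin]
    have h2 : (cnbr K s(u, v) ∪ {u, v}).card ≤ (cnbr K s(u, v)).card + 2 := by
      refine (card_union_le _ _).trans ?_
      have : ({u, v} : Finset (Fin k)).card ≤ 2 := (card_insert_le _ _).trans (by simp)
      omega
    omega
  refine hWcard.trans ?_
  refine card_le_card_of_injOn (fun w => if K.Adj u w then s(v, w) else s(u, w)) ?_ ?_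
  · intro w hw
    rw [hW, mem_coe, mem_sdiff, mem_union, mem_insert, mem_singleton] at hw
    push_neg at hw
    obtain ⟨-, hwc, hwu, hwv⟩ := hw
    rw [mem_cnbr] at hwc
    by_cases h : K.Adj u w
    · have hnv : ¬ K.Adj v w := fun h2 => hwc ⟨h, h2⟩
      simp only [h, if_true, mem_coe, mem_filter, mem_edgeFinset, mem_edgeSet]
      exact ⟨(by simp [compl_adj, Ne.symm hwv, hnv] : Kᶜ.Adj v w), v, by simp, by simp⟩
    · simp only [h, if_false, mem_coe, mem_filter, mem_edgeFinset, mem_edgeSet]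
      exact ⟨(by simp [compl_adj, Ne.symm hwu, h] : Kᶜ.Adj u w), u, by simp, by simp⟩
  · intro w hw w' hw' heq
    rw [mem_coe] at hw hw'
    rw [hW] at hw hw'
    rw [mem_sdiff, mem_union, mem_insert, mem_singleton] at hw hw'
    push_neg at hw hw'
    obtain ⟨-, -, hwu, hwv⟩ := hw
    obtain ⟨-, -, hw'u, hw'v⟩ := hw'
    simp only at heq
    have hmem : w' ∈ (if K.Adj u w then s(v, w) else s(u, w)) := by
      rw [heq]; split <;> simp
    revert hmem; split <;>
    · intro hmem
      rcases Sym2.mem_iff.1 hmem with rfl | rfl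
      · exact absurd rfl (by assumption)
      · rfl

/-- At most 2(k-1) edges of K share a vertex with a given pair f. -/
lemma U1upper {x y : Fin k} (hxy : x ≠ y) :
    ((K.edgeFinset).filter (fun e => ∃ z, z ∈ e ∧ z ∈ s(x, y))).card ≤ 2 * (k - 1) := by
  classical
  have hsub : (K.edgeFinset).filter (fun e => ∃ z, z ∈ e ∧ z ∈ s(x, y)) ⊆
      K.incidenceFinset x ∪ K.incidenceFinset y := by
    intro e he
    rw [mem_filter] at he
    obtain ⟨he, z, hze, hzf⟩ := he
    rw [mem_union, mem_incidenceFinset, mem_incidenceFinset]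
    rcases Sym2.mem_iff.1 hzf with rfl | rfl
    · exact Or.inl ⟨mem_edgeFinset.1 he, hze⟩
    · exact Or.inr ⟨mem_edgeFinset.1 he, hze⟩
  refine (card_le_card hsub).trans ?_
  refine (card_union_le _ _).trans ?_
  rw [card_incidenceFinset_eq_degree, card_incidenceFinset_eq_degree]
  have h1 := K.degree_lt_card_verts x
  have h2 := K.degree_lt_card_verts y
  rw [Fintype.card_fin] at h1 h2
  omega


lemma U2count {u v : Fin k} (huv : K.Adj u v) (hnc : ¬ covp K r s(u, v)) (hr3 : 3 ≤ r)
    (hrs : r ≤ (cnbr K s(u, v)).card)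
    (hext : ∀ {T : Finset (Fin k)}, T ⊆ cnbr K s(u, v) → T.card = r - 2 →
      K.IsClique ↑T → covp K r s(u, v)) :
    (cnbr K s(u, v)).card.choose 2 ≤
      (r - 2).choose 2 *
        ((Kᶜ.edgeFinset).filter (fun f => ∀ x ∈ f, x ∈ cnbr K s(u, v))).card := by
  classical
  set S := cnbr K s(u, v) with hS
  set m := r - 2 with hm
  set F := (Kᶜ.edgeFinset).filter (fun f => ∀ x ∈ f, x ∈ S) with hF
  -- every m-subset of S contains a missing pair
  have hmiss : ∀ T ∈ S.powersetCard m, ∃ x ∈ T, ∃ y ∈ T, x ≠ y ∧ ¬ K.Adj x y := by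
    intro T hT
    rw [mem_powersetCard] at hT
    have hncl : ¬ K.IsClique ↑T := fun hcl => hnc (hext hT.1 hT.2 hcl)
    rw [SimpleGraph.isClique_iff, Set.Pairwise] at hncl
    push_neg at hncl
    obtain ⟨x, hx, y, hy, hxy, hna⟩ := hncl
    exact ⟨x, hx, y, hy, hxy, hna⟩
  -- double count
  have hdc : (S.powersetCard m).card * 1 ≤ F.card * ((S.card - 2).choose (m - 2)) := by
    refine card_mul_le_card_mul (fun T f => ∀ x ∈ f, x ∈ T) ?_ ?_
    · intro T hT
      obtain ⟨x, hx, y, hy, hxy, hna⟩ := hmiss T hT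
      have hTS : T ⊆ S := (mem_powersetCard.1 hT).1
      refine card_pos.2 ⟨s(x, y), ?_⟩
      rw [mem_bipartiteAbove, hF, mem_filter]
      have hmem : ∀ z ∈ s(x, y), z ∈ T := by
        intro z hz; rcases Sym2.mem_iff.1 hz with rfl | rfl <;> assumption
      exact ⟨⟨mem_edgeFinset.2 (by rw [mem_edgeSet, compl_adj]; exact ⟨hxy, hna⟩),
        fun z hz => hTS (hmem z hz)⟩, hmem⟩
    · intro f hf
      rw [hF, mem_filter] at hf
      obtain ⟨hfm, hfS⟩ := hf
      induction f using Sym2.ind with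
      | _ x y =>
        have hxy : x ≠ y := ((mem_edgeSet _).1 (mem_edgeFinset.1 hfm)).ne
        have hxS : x ∈ S := hfS x (by simp)
        have hyS : y ∈ S := hfS y (by simp)
        calc ((S.powersetCard m).bipartiteBelow (fun T f => ∀ x ∈ f, x ∈ T) s(x, y)).card
            ≤ ((S \ {x, y}).powersetCard (m - 2)).card := by
              refine card_le_card_of_injOn (fun T => T \ {x, y}) ?_ ?_
              · intro T hT
                rw [mem_coe, mem_bipartiteBelow] at hT
                obtain ⟨hT, hrel⟩ := hT
                rw [mem_powersetCard] at hT; rw [mem_coe, mem_powersetCard]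
                have hxT : x ∈ T := hrel x (by simp)
                have hyT : y ∈ T := hrel y (by simp)
                have hsub : {x, y} ⊆ T := by
                  intro z hz
                  simp only [mem_insert, mem_singleton] at hz
                  rcases hz with rfl | rfl
                  exacts [hxT, hyT]
                refine ⟨sdiff_subset_sdiff hT.1 le_rfl, ?_⟩
                rw [card_sdiff_of_subset hsub, hT.2]
                simp [card_insert_of_notMem, hxy]
              · intro T hT T' hT' heq
                rw [mem_coe, mem_bipartiteBelow] at hT hT'
                have hsubT : {x, y} ⊆ T := by
                  intro z hz
                  simp only [mem_insert, mem_singleton] at hz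
                  rcases hz with rfl | rfl
                  exacts [hT.2 _ (by simp), hT.2 _ (by simp)]
                have hsubT' : {x, y} ⊆ T' := by
                  intro z hz
                  simp only [mem_insert, mem_singleton] at hz
                  rcases hz with rfl | rfl
                  exacts [hT'.2 _ (by simp), hT'.2 _ (by simp)]
                have := congrArg (fun s => s ∪ ({x, y} : Finset (Fin k))) heq
                simpa [sdiff_union_of_subset hsubT, sdiff_union_of_subset hsubT'] using this
        _ = (S.card - 2).choose (m - 2) := by
              rw [card_powersetCard, card_sdiff_of_subset (by
                intro z hz
                simp only [mem_insert, mem_singleton] at hz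
                rcases hz with rfl | rfl
                exacts [hxS, hyS])]
              congr 1
              simp [card_insert_of_notMem, hxy]
  rw [card_powersetCard, mul_one] at hdc
  -- identity: C(s,m) * C(m,2) = C(s,2) * C(s-2, m-2)
  have hms : m ≤ S.card := le_trans (by omega) hrs
  have h2m : 2 ≤ m ∨ m = 1 := by omega
  rcases h2m with h2m | h1m
  · have hid := Nat.choose_mul (n := S.card) h2m
    have hpos : 0 < (S.card - 2).choose (m - 2) := Nat.choose_pos (by omega)
    have : S.card.choose 2 * ((S.card - 2).choose (m - 2)) ≤
        (m.choose 2 * F.card) * ((S.card - 2).choose (m - 2)) := by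
      calc S.card.choose 2 * ((S.card - 2).choose (m - 2))
          = S.card.choose m * m.choose 2 := hid.symm
        _ ≤ (F.card * ((S.card - 2).choose (m - 2))) * m.choose 2 :=
            Nat.mul_le_mul_right _ hdc
        _ = (m.choose 2 * F.card) * ((S.card - 2).choose (m - 2)) := by ring
    exact Nat.le_of_mul_le_mul_right this hpos
  · -- r = 3 : contradiction, a single common neighbor extends e to a triangle
    exfalso
    have hS1 : 1 ≤ S.card := by omega
    obtain ⟨x, hx⟩ := card_pos.1 hS1
    refine hnc (hext (T := {x}) (by simpa using hx) (by simp; omega) (by simp))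


set_option maxHeartbeats 1000000 in
lemma arith (γ kR qR rR s0 C E M U1 U2 Cov : ℝ)
    (hr : 3 ≤ rR) (hk : 100 * rR ≤ kR)
    (hq1 : rR * qR ≤ kR) (hq2 : kR < rR * qR + rR) (hq3 : 2 ≤ qR)
    (hs0 : s0 = kR - 2 * qR)
    (hC : C = kR * (kR - 1) / 2)
    (hγ : 0 < γ)
    (hEM : E + M = C) (hE : (1 - γ) * C ≤ E)
    (hCov : Cov + U1 + U2 = E)
    (hM0 : 0 ≤ M) (hU10 : 0 ≤ U1) (hU20 : 0 ≤ U2)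
    (h1 : U1 * (2 * qR - 2) ≤ M * (2 * (kR - 1)))
    (h2 : U2 * ((s0 + 1) * s0 / 2) ≤ ((rR - 2) * (rR - 3) / 2) * (M * C)) :
    (1 - γ * rR ^ 2) * C ≤ Cov := by
  have hk0 : 300 ≤ kR := by linarith
  have hC0 : 0 < C := by rw [hC]; nlinarith
  have hG0 : 0 ≤ γ * C := by positivity
  have hM : M ≤ γ * C := by linarith
  have hD0 : (0:ℝ) < 2 * qR - 2 := by linarith
  -- bound U1
  have hkD : 2 * (kR - 1) ≤ 2 * rR * (2 * qR - 2) := by linarith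
  have hU1b : U1 ≤ 2 * rR * (γ * C) := by
    have step : U1 * (2 * qR - 2) ≤ (2 * rR * (γ * C)) * (2 * qR - 2) := by
      calc U1 * (2 * qR - 2) ≤ M * (2 * (kR - 1)) := h1
        _ ≤ (γ * C) * (2 * rR * (2 * qR - 2)) := by
            apply mul_le_mul hM hkD (by linarith) hG0
        _ = (2 * rR * (γ * C)) * (2 * qR - 2) := by ring
    exact le_of_mul_le_mul_right step hD0
  -- bound U2
  have hrq : rR * s0 = rR * kR - 2 * (rR * qR) := by rw [hs0]; ring
  have hrs0 : kR * (rR - 2) ≤ rR * s0 := by rw [hrq]; linarith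
  have hq0 : (0:ℝ) ≤ qR := by linarith
  have h3q : (0:ℝ) ≤ (rR - 3) * qR := mul_nonneg (by linarith) hq0
  have hs0pos : 0 < s0 := by rw [hs0]; linarith [h3q]
  have hB0 : (0:ℝ) < (s0 + 1) * s0 / 2 := by positivity
  set Y : ℝ := rR ^ 2 * (rR - 3) / (2 * (rR - 2)) with hY
  have h3 : (0:ℝ) ≤ rR - 3 := by linarith
  have hYnn : 0 ≤ Y := by
    apply div_nonneg _ (by linarith)
    exact mul_nonneg (sq_nonneg rR) (by linarith)
  have hsq : (kR * (rR - 2)) * (kR * (rR - 2)) ≤ (rR * s0) * (rR * s0) :=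
    mul_self_le_mul_self (mul_nonneg (by linarith) (by linarith)) hrs0
  have hx1 : (rR - 2) ^ 2 * (kR * (kR - 1)) ≤ rR ^ 2 * ((s0 + 1) * s0) := by
    linarith [hsq, mul_nonneg (sq_nonneg (rR - 2)) (by linarith : (0:ℝ) ≤ kR),
      mul_nonneg (sq_nonneg rR) hs0pos.le]
  have hmain : (rR - 3) * ((rR - 2) ^ 2 * (kR * (kR - 1))) ≤
      (rR - 3) * (rR ^ 2 * ((s0 + 1) * s0)) := mul_le_mul_of_nonneg_left hx1 h3
  have h2r : (0:ℝ) < 2 * (rR - 2) := by linarith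
  have hkey : ((rR - 2) * (rR - 3) / 2) * C ≤ Y * ((s0 + 1) * s0 / 2) := by
    apply le_of_mul_le_mul_right _ h2r
    have e1 : ((rR - 2) * (rR - 3) / 2) * C * (2 * (rR - 2)) =
        ((rR - 3) * ((rR - 2) ^ 2 * (kR * (kR - 1)))) / 2 := by rw [hC]; ring
    have e2 : Y * ((s0 + 1) * s0 / 2) * (2 * (rR - 2)) =
        ((rR - 3) * (rR ^ 2 * ((s0 + 1) * s0))) / 2 := by
      rw [hY]
      have hne : (2 * (rR - 2)) ≠ 0 := (by linarith : (0:ℝ) < 2 * (rR - 2)).ne'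
      rw [show rR ^ 2 * (rR - 3) / (2 * (rR - 2)) * ((s0 + 1) * s0 / 2) * (2 * (rR - 2)) = rR ^ 2 * (rR - 3) * ((s0 + 1) * s0 / 2) * ((2 * (rR - 2)) / (2 * (rR - 2))) by ring, div_self hne]
      ring
    rw [e1, e2]
    linarith
  have hU2b : U2 ≤ Y * (γ * C) := by
    have step : U2 * ((s0 + 1) * s0 / 2) ≤ (Y * (γ * C)) * ((s0 + 1) * s0 / 2) := by
      calc U2 * ((s0 + 1) * s0 / 2) ≤ ((rR - 2) * (rR - 3) / 2) * (M * C) := h2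
        _ ≤ ((rR - 2) * (rR - 3) / 2) * ((γ * C) * C) := by
            apply mul_le_mul_of_nonneg_left _ (div_nonneg (mul_nonneg (by linarith) (by linarith)) (by norm_num))
            apply mul_le_mul_of_nonneg_right hM hC0.le
        _ = (((rR - 2) * (rR - 3) / 2) * C) * (γ * C) := by ring
        _ ≤ (Y * ((s0 + 1) * s0 / 2)) * (γ * C) := by
            apply mul_le_mul_of_nonneg_right hkey hG0
        _ = (Y * (γ * C)) * ((s0 + 1) * s0 / 2) := by ring
    exact le_of_mul_le_mul_right step hB0
  -- final
  have hYb : Y ≤ (rR ^ 2 - 1) - 2 * rR := by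
    rw [hY, div_le_iff₀ (by linarith : (0:ℝ) < 2 * (rR - 2))]
    linarith [mul_nonneg (mul_nonneg (by linarith : (0:ℝ) ≤ rR - 3) (by linarith : (0:ℝ) ≤ rR)) (by linarith : (0:ℝ) ≤ rR - 2)]
  have hfin : 0 ≤ rR ^ 2 * (γ * C) - (γ * C) - 2 * rR * (γ * C) - Y * (γ * C) := by
    have h0 : 0 ≤ ((rR ^ 2 - 1) - 2 * rR - Y) * (γ * C) := mul_nonneg (by linarith) hG0
    linarith [h0]
  have e3 : (1 - γ * rR ^ 2) * C = C - rR ^ 2 * (γ * C) := by ring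
  have e4 : (1 - γ) * C = C - γ * C := by ring
  rw [e3]
  rw [e4] at hE
  linarith



end EdgesCov

set_option maxHeartbeats 1600000 in
theorem edges_covered_by_cliques (γ : ℝ) (hγ : 0 < γ) (r : ℕ) (hr : 2 ≤ r) :
    ∃ N : ℕ, ∀ k : ℕ, N ≤ k → ∀ (K : SimpleGraph (Fin k)),
      (1 - γ) * (k.choose 2 : ℝ) ≤ K.edgeSet.ncard →
      (1 - γ * r ^ 2) * (k.choose 2 : ℝ) ≤
        ({e ∈ K.edgeSet | ∃ s : Finset (Fin k), s.card = r ∧ K.IsClique ↑s ∧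
          ∀ v ∈ e, v ∈ s}.ncard : ℝ) := by
  classical
  open EdgesCov in
  rcases eq_or_lt_of_le hr with hr2 | hr3
  · -- r = 2 : every edge is covered by itself
    subst hr2
    refine ⟨2, fun k hk K hE => ?_⟩
    have hset : {e ∈ K.edgeSet | ∃ s : Finset (Fin k), s.card = 2 ∧ K.IsClique ↑s ∧
        ∀ v ∈ e, v ∈ s} = K.edgeSet := by
      apply Set.Subset.antisymm (fun e he => he.1)
      intro e he
      refine ⟨he, ?_⟩
      induction e using Sym2.ind with
      | _ u v =>
        have hadj : K.Adj u v := he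
        refine ⟨{u, v}, by simp [hadj.ne], ?_, ?_⟩
        · intro a ha b hb hab
          simp only [coe_insert, coe_singleton, Set.mem_insert_iff, Set.mem_singleton_iff] at ha hb
          rcases ha with rfl | rfl <;> rcases hb with rfl | rfl
          · exact absurd rfl hab
          · exact hadj
          · exact hadj.symm
          · exact absurd rfl hab
        · intro x hx
          rcases Sym2.mem_iff.1 hx with rfl | rfl <;> simp
    rw [hset]
    have hCnn : (0:ℝ) ≤ (k.choose 2 : ℝ) := by positivity
    have h4 : ((2:ℕ):ℝ)^2 = 4 := by norm_num
    rw [h4]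
    linarith [hE, mul_nonneg hγ.le hCnn]
  · -- r ≥ 3
    have hr3 : 3 ≤ r := hr3
    refine ⟨100 * r, fun k hk K hE => ?_⟩
    letI : DecidableRel K.Adj := Classical.decRel _
    -- finset versions
    set q : ℕ := k / r with hqdef
    set s₀ : ℕ := k - 2 * q with hs₀def
    set Cov : Finset (Sym2 (Fin k)) := K.edgeFinset.filter (covp K r) with hCov
    set U : Finset (Sym2 (Fin k)) := K.edgeFinset.filter (fun e => ¬ covp K r e) with hU
    set U1 : Finset (Sym2 (Fin k)) := U.filter (fun e => (cnbr K e).card ≤ s₀) with hU1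
    set U2 : Finset (Sym2 (Fin k)) := U.filter (fun e => ¬ (cnbr K e).card ≤ s₀) with hU2
    set Mis : Finset (Sym2 (Fin k)) := Kᶜ.edgeFinset with hMis
    -- the covered set is ↑Cov
    have hset : {e ∈ K.edgeSet | ∃ s : Finset (Fin k), s.card = r ∧ K.IsClique ↑s ∧
        ∀ v ∈ e, v ∈ s} = ↑Cov := by
      ext e
      simp only [hCov, coe_filter, mem_edgeFinset, Set.mem_setOf_eq, covp]
    rw [hset, Set.ncard_coe_finset]
    -- edge set cardinality
    have hEcard : K.edgeSet.ncard = K.edgeFinset.card := by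
      rw [← Set.ncard_coe_finset, coe_edgeFinset]
    rw [hEcard] at hE
    -- basic nat facts
    have hq1 : r * q ≤ k := by rw [hqdef]; exact Nat.mul_div_le k r
    have hq2 : k < r * q + r := by
      have h1 : r * (k / r) + k % r = k := Nat.div_add_mod k r
      rw [← hqdef] at h1
      have h2 : k % r < r := Nat.mod_lt _ (by omega)
      rw [← h1]
      exact Nat.add_lt_add_left h2 _
    have h3q : 3 * q ≤ r * q := Nat.mul_le_mul_right q hr3
    obtain ⟨R, hRdef⟩ : ∃ R, R = r * q := ⟨_, rfl⟩
    have hq1R : R ≤ k := by omega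
    have hq2R : k < R + r := by omega
    have h3qR : 3 * q ≤ R := by omega
    have hkk : 300 ≤ k := by omega
    have hq3 : 2 ≤ q := by
      rw [hqdef, Nat.le_div_iff_mul_le (by omega)]
      omega
    have h2q : 2 * q + 2 ≤ k := by omega
    have hs0r : r ≤ s₀ + 1 := by omega
    have hD : k - 2 - s₀ = 2 * q - 2 := by omega
    -- cardinal identities
    have nCU : Cov.card + U.card = K.edgeFinset.card := by
      rw [hCov, hU]
      exact card_filter_add_card_filter_not _
    have nU12 : U1.card + U2.card = U.card := by
      rw [hU1, hU2]
      exact card_filter_add_card_filter_not _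
    have nEM : K.edgeFinset.card + Mis.card = k.choose 2 := by
      have hdisj : Disjoint K.edgeFinset Kᶜ.edgeFinset := by
        rw [Finset.disjoint_left]
        intro e he he'
        rw [mem_edgeFinset] at he he'
        induction e using Sym2.ind with
        | _ u v =>
          simp only [mem_edgeSet, compl_adj] at he he'
          exact he'.2 he
      have hunion : K.edgeFinset ∪ Kᶜ.edgeFinset = (⊤ : SimpleGraph (Fin k)).edgeFinset := by
        ext e
        induction e using Sym2.ind with
        | _ u v =>
          simp only [mem_union, mem_edgeFinset, mem_edgeSet, compl_adj, top_adj]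
          constructor
          · rintro (h | ⟨h1, h2⟩)
            · exact h.ne
            · exact h1
          · intro h
            by_cases hA : K.Adj u v
            · exact Or.inl hA
            · exact Or.inr ⟨h, hA⟩
      have := card_union_of_disjoint hdisj
      rw [hunion, card_edgeFinset_top_eq_card_choose_two, Fintype.card_fin] at this
      rw [hMis, ← this]
    have hEC : K.edgeFinset.card ≤ k.choose 2 := by omega
    -- double counting 1
    have h1 : U1.card * (k - 2 - s₀) ≤ Mis.card * (2 * (k - 1)) := by
      refine card_mul_le_card_mul (fun e f => ∃ x, x ∈ e ∧ x ∈ f) ?_ ?_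
      · intro e he
        rw [hU1, mem_filter, hU, mem_filter] at he
        obtain ⟨⟨heK, -⟩, hse⟩ := he
        rw [mem_edgeFinset] at heK
        induction e using Sym2.ind with
        | _ u v =>
          have hadj : K.Adj u v := heK
          calc k - 2 - s₀ ≤ k - 2 - (cnbr K s(u, v)).card := Nat.sub_le_sub_left hse _
            _ ≤ ((Kᶜ.edgeFinset).filter (fun f => ∃ x, x ∈ s(u, v) ∧ x ∈ f)).card :=
                U1count K hadj
            _ = (Mis.bipartiteAbove (fun e f => ∃ x, x ∈ e ∧ x ∈ f) s(u, v)).card := rfl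
      · intro f hf
        rw [hMis, mem_edgeFinset] at hf
        induction f using Sym2.ind with
        | _ x y =>
          have hxy : x ≠ y := by
            simp only [mem_edgeSet, compl_adj] at hf
            exact hf.1
          calc (U1.bipartiteBelow (fun e f => ∃ x, x ∈ e ∧ x ∈ f) s(x, y)).card
              ≤ ((K.edgeFinset).filter (fun e => ∃ z, z ∈ e ∧ z ∈ s(x, y))).card := by
                apply card_le_card
                apply filter_subset_filter
                rw [hU1, hU]
                exact (filter_subset _ _).trans (filter_subset _ _)
            _ ≤ 2 * (k - 1) := U1upper K hxy
    -- double counting 2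
    have h2 : U2.card * ((s₀ + 1).choose 2) ≤ (r - 2).choose 2 * (Mis.card * k.choose 2) := by
      have perE : ∀ e ∈ U2, (s₀ + 1).choose 2 ≤
          (r - 2).choose 2 * (Mis.bipartiteAbove (fun e f => ∀ x ∈ f, x ∈ cnbr K e) e).card := by
        intro e he
        rw [hU2, mem_filter, hU, mem_filter] at he
        obtain ⟨⟨heK, hnc⟩, hse⟩ := he
        rw [mem_edgeFinset] at heK
        push_neg at hse
        induction e using Sym2.ind with
        | _ u v =>
          have hadj : K.Adj u v := heK
          have hrs : r ≤ (cnbr K s(u, v)).card := by omega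
          calc (s₀ + 1).choose 2 ≤ (cnbr K s(u, v)).card.choose 2 :=
                Nat.choose_le_choose 2 (by omega)
            _ ≤ (r - 2).choose 2 *
                ((Kᶜ.edgeFinset).filter (fun f => ∀ x ∈ f, x ∈ cnbr K s(u, v))).card :=
                U2count K hadj hnc hr3 hrs
                  (fun hT hTc hcl => extend_clique K hadj hr hT hTc hcl)
            _ = (r - 2).choose 2 *
                (Mis.bipartiteAbove (fun e f => ∀ x ∈ f, x ∈ cnbr K e) s(u, v)).card := rfl
      calc U2.card * ((s₀ + 1).choose 2)
          = ∑ _e ∈ U2, (s₀ + 1).choose 2 := by rw [sum_const, smul_eq_mul, mul_comm]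
        _ ≤ ∑ e ∈ U2, (r - 2).choose 2 *
              (Mis.bipartiteAbove (fun e f => ∀ x ∈ f, x ∈ cnbr K e) e).card :=
            sum_le_sum perE
        _ = (r - 2).choose 2 * ∑ e ∈ U2,
              (Mis.bipartiteAbove (fun e f => ∀ x ∈ f, x ∈ cnbr K e) e).card := by
            rw [mul_sum]
        _ = (r - 2).choose 2 * ∑ f ∈ Mis,
              (U2.bipartiteBelow (fun e f => ∀ x ∈ f, x ∈ cnbr K e) f).card := by
            rw [sum_card_bipartiteAbove_eq_sum_card_bipartiteBelow]
        _ ≤ (r - 2).choose 2 * (Mis.card * k.choose 2) := by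
            apply Nat.mul_le_mul_left
            calc ∑ f ∈ Mis, (U2.bipartiteBelow (fun e f => ∀ x ∈ f, x ∈ cnbr K e) f).card
                ≤ ∑ _f ∈ Mis, k.choose 2 := by
                  apply sum_le_sum
                  intro f hf
                  calc (U2.bipartiteBelow _ f).card ≤ U2.card :=
                        card_le_card (filter_subset _ _)
                    _ ≤ K.edgeFinset.card := by
                        apply card_le_card
                        rw [hU2, hU]
                        exact (filter_subset _ _).trans (filter_subset _ _)
                    _ ≤ k.choose 2 := hEC
              _ = Mis.card * k.choose 2 := by rw [sum_const, smul_eq_mul]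
    -- now the real arithmetic
    refine arith γ k q r s₀ (k.choose 2 : ℝ) (K.edgeFinset.card : ℝ) (Mis.card : ℝ)
      (U1.card : ℝ) (U2.card : ℝ) (Cov.card : ℝ)
      (by exact_mod_cast hr3) (by exact_mod_cast hk) ?_ ?_ (by exact_mod_cast hq3) ?_
      (Nat.cast_choose_two ℝ k) hγ ?_ hE ?_ (by positivity) (by positivity) (by positivity)
      ?_ ?_
    · exact_mod_cast hq1
    · exact_mod_cast hq2
    · push_cast [hs₀def, Nat.cast_sub (by omega : 2 * q ≤ k)]
      ring
    · exact_mod_cast nEM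
    · push_cast [← nCU, ← nU12]
      ring
    · have := h1
      rw [hD] at this
      have hcast : ((U1.card * (2 * q - 2) : ℕ) : ℝ) ≤ ((Mis.card * (2 * (k - 1)) : ℕ) : ℝ) := by
        exact_mod_cast this
      push_cast [Nat.cast_sub (by omega : 2 ≤ 2 * q), Nat.cast_sub (by omega : 1 ≤ k)] at hcast
      convert hcast using 1 <;> ring
    · have hcast : ((U2.card * ((s₀ + 1).choose 2) : ℕ) : ℝ) ≤
          (((r - 2).choose 2 * (Mis.card * k.choose 2) : ℕ) : ℝ) := by exact_mod_cast h2
      rw [Nat.cast_mul, Nat.cast_mul, Nat.cast_mul, Nat.cast_choose_two,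
        Nat.cast_choose_two] at hcast
      push_cast [Nat.cast_sub (by omega : 2 ≤ r)] at hcast
      calc (U2.card : ℝ) * (((s₀:ℝ) + 1) * (s₀:ℝ) / 2)
          = (U2.card : ℝ) * (((s₀:ℝ) + 1) * (((s₀:ℝ) + 1) - 1) / 2) := by ring
        _ ≤ ((r:ℝ) - 2) * (((r:ℝ) - 2) - 1) / 2 * ((Mis.card : ℝ) * (k.choose 2 : ℝ)) := hcast
        _ = ((r:ℝ) - 2) * ((r:ℝ) - 3) / 2 * ((Mis.card : ℝ) * (k.choose 2 : ℝ)) := by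
            ring
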